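/- Let g : ℝ → ℝ be continuous, nonnegative, not identically zero, compactly supported, and even. Then for every real N ≠ 0, |∫ e^{iNt} g(t) dt| < ∫ g(t) dt. -/

import Mathlib

/-- For a continuous, nonnegative, not identically zero, compactly
supported, even function `g`, and every `N ≠ 0`,
`|∫ e^{iNt} g(t) dt| < ∫ g(t) dt`. -/
theorem stmt_7 (g : ℝ → ℝ) (hg : Continuous g) (hpos : ∀ t, 0 ≤ g t)
    (hne : ∃ t, g t ≠ 0) (hcs : HasCompactSupport g)
    (heven : ∀ t, g (-t) = g t) :
    ∀ N : ℝ, N ≠ 0 →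
      ‖(∫ t : ℝ, Complex.exp (Complex.I * N * t) * (g t : ℂ))‖ <
        ∫ t : ℝ, g t := by
  intro N hN
  -- basic integrabilities
  have hgi : MeasureTheory.Integrable g := hg.integrable_of_hasCompactSupport hcs
  have hcosc : Continuous fun t : ℝ => Real.cos (N * t) * g t :=
    (Real.continuous_cos.comp (continuous_const.mul continuous_id)).mul hg
  have hsinc : Continuous fun t : ℝ => Real.sin (N * t) * g t :=
    (Real.continuous_sin.comp (continuous_const.mul continuous_id)).mul hg
  have habsc : Continuous fun t : ℝ => |Real.cos (N * t)| * g t :=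
    ((Real.continuous_cos.comp (continuous_const.mul continuous_id)).abs).mul hg
  have hcosi : MeasureTheory.Integrable fun t : ℝ => Real.cos (N * t) * g t :=
    hcosc.integrable_of_hasCompactSupport (hcs.mul_left)
  have hsini : MeasureTheory.Integrable fun t : ℝ => Real.sin (N * t) * g t :=
    hsinc.integrable_of_hasCompactSupport (hcs.mul_left)
  have habsi : MeasureTheory.Integrable fun t : ℝ => |Real.cos (N * t)| * g t :=
    habsc.integrable_of_hasCompactSupport (hcs.mul_left)
  -- the complex integral equals the real cosine integral
  have hsin0 : (∫ t : ℝ, Real.sin (N * t) * g t) = 0 := by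
    have h1 : (∫ t : ℝ, Real.sin (N * -t) * g (-t)) = ∫ t : ℝ, Real.sin (N * t) * g t :=
      MeasureTheory.integral_neg_eq_self (fun t => Real.sin (N * t) * g t) _
    have h2 : ∀ t : ℝ, Real.sin (N * -t) * g (-t) = -(Real.sin (N * t) * g t) := by
      intro t
      rw [heven, mul_neg, Real.sin_neg]; ring
    simp_rw [h2] at h1
    rw [MeasureTheory.integral_neg] at h1
    linarith
  have hkey : (∫ t : ℝ, Complex.exp (Complex.I * N * t) * (g t : ℂ))
      = ((∫ t : ℝ, Real.cos (N * t) * g t : ℝ) : ℂ) := by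
    have hpt : ∀ t : ℝ, Complex.exp (Complex.I * N * t) * (g t : ℂ)
        = ((Real.cos (N * t) * g t : ℝ) : ℂ) + ((Real.sin (N * t) * g t : ℝ) : ℂ) * Complex.I := by
      intro t
      have : (Complex.I * N * t) = ((N * t : ℝ) : ℂ) * Complex.I := by push_cast; ring
      rw [this, Complex.exp_mul_I, ← Complex.ofReal_cos, ← Complex.ofReal_sin]
      push_cast
      ring
    simp_rw [hpt]
    have e1 : (∫ a : ℝ, ((Real.cos (N * a) * g a : ℝ) : ℂ))
        = ((∫ t : ℝ, Real.cos (N * t) * g t : ℝ) : ℂ) := integral_ofReal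
    have e2 : (∫ a : ℝ, ((Real.sin (N * a) * g a : ℝ) : ℂ))
        = ((∫ t : ℝ, Real.sin (N * t) * g t : ℝ) : ℂ) := integral_ofReal
    rw [MeasureTheory.integral_add, MeasureTheory.integral_mul_const, e1, e2, hsin0]
    · simp
    · exact (hcosi.ofReal (𝕜 := ℂ))
    · exact ((hsini.ofReal (𝕜 := ℂ)).mul_const Complex.I)
  rw [hkey, Complex.norm_real, Real.norm_eq_abs]
  -- find a point where g > 0 and |cos (N t)| < 1
  obtain ⟨t1, ht1⟩ := hne
  have hgt1 : 0 < g t1 := lt_of_le_of_ne (hpos t1) (Ne.symm ht1)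
  have hopen : IsOpen {t : ℝ | 0 < g t} := isOpen_lt continuous_const hg
  obtain ⟨ε, hε, hball⟩ := Metric.isOpen_iff.1 hopen t1 hgt1
  obtain ⟨t0, hgt0, hcost0⟩ : ∃ t0 : ℝ, 0 < g t0 ∧ |Real.cos (N * t0)| < 1 := by
    by_cases hc : |Real.cos (N * t1)| < 1
    · exact ⟨t1, hgt1, hc⟩
    · have hc1 : |Real.cos (N * t1)| = 1 :=
        le_antisymm (Real.abs_cos_le_one _) (not_lt.1 hc)
      have hsin1 : Real.sin (N * t1) = 0 := by
        nlinarith [Real.sin_sq_add_cos_sq (N * t1), sq_abs (Real.cos (N * t1)),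
          sq_nonneg (Real.sin (N * t1))]
      set δ : ℝ := min (ε / 2) (Real.pi / (2 * |N|)) with hδdef
      have hNpos : 0 < |N| := abs_pos.2 hN
      have hδpos : 0 < δ := lt_min (by linarith) (by positivity)
      have hδε : δ < ε := lt_of_le_of_lt (min_le_left _ _) (by linarith)
      have hmem : (t1 + δ) ∈ Metric.ball t1 ε := by
        simp [Real.dist_eq, abs_of_pos hδpos, hδε]
      refine ⟨t1 + δ, hball hmem, ?_⟩
      have hsinδ : Real.sin (N * δ) ≠ 0 := by
        intro h0
        obtain ⟨n, hn⟩ := Real.sin_eq_zero_iff.1 h0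
        have habs : |N * δ| ≤ Real.pi / 2 := by
          rw [abs_mul, abs_of_pos hδpos]
          calc |N| * δ ≤ |N| * (Real.pi / (2 * |N|)) := by
                exact mul_le_mul_of_nonneg_left (min_le_right _ _) (le_of_lt hNpos)
            _ = Real.pi / 2 := by field_simp
        have hne0 : N * δ ≠ 0 := mul_ne_zero hN (ne_of_gt hδpos)
        have hn0 : n ≠ 0 := by
          rintro rfl
          simp only [Int.cast_zero, zero_mul] at hn
          exact hne0 hn.symm
        have : (1 : ℝ) ≤ |(n : ℝ)| := by
          exact_mod_cast Int.one_le_abs hn0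
        have hpi : Real.pi ≤ |N * δ| := by
          rw [← hn, abs_mul, abs_of_pos Real.pi_pos]
          nlinarith [Real.pi_pos]
        nlinarith [Real.pi_pos]
      have hsint : Real.sin (N * (t1 + δ)) ≠ 0 := by
        rw [mul_add, Real.sin_add, hsin1]
        simp only [zero_mul, zero_add]
        intro h
        rcases mul_eq_zero.1 h with h | h
        · rw [← abs_eq_zero] at h; rw [hc1] at h; norm_num at h
        · exact hsinδ h
      have := Real.sin_sq_add_cos_sq (N * (t1 + δ))
      have hsq : Real.sin (N * (t1 + δ)) ^ 2 > 0 := by positivity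
      rw [abs_lt]
      constructor <;> nlinarith
  -- strict inequality for the cosine integral
  have hle : ∀ t : ℝ, |Real.cos (N * t)| * g t ≤ g t := fun t =>
    mul_le_of_le_one_left (hpos t) (Real.abs_cos_le_one _)
  set h : ℝ → ℝ := fun t => g t - |Real.cos (N * t)| * g t with hhdef
  have hhc : Continuous h := hg.sub habsc
  have hhnn : ∀ t, 0 ≤ h t := fun t => sub_nonneg.2 (hle t)
  have hhi : MeasureTheory.Integrable h := hgi.sub habsi
  have hht0 : 0 < h t0 := by
    have : |Real.cos (N * t0)| * g t0 < 1 * g t0 :=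
      mul_lt_mul_of_pos_right hcost0 hgt0
    simp only [hhdef]; nlinarith
  have hsupp : 0 < MeasureTheory.volume (Function.support h) := by
    have hopen' : IsOpen (Function.support h) := hhc.isOpen_support
    exact hopen'.measure_pos _ ⟨t0, ne_of_gt hht0⟩
  have hpos' : 0 < ∫ t, h t := by
    rw [MeasureTheory.integral_pos_iff_support_of_nonneg hhnn hhi]
    exact hsupp
  have hsub : (∫ t, h t) = (∫ t : ℝ, g t) - ∫ t : ℝ, |Real.cos (N * t)| * g t :=
    MeasureTheory.integral_sub hgi habsi
  have hstrict : (∫ t : ℝ, |Real.cos (N * t)| * g t) < ∫ t : ℝ, g t := by linarith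
  calc |∫ t : ℝ, Real.cos (N * t) * g t| = ‖∫ t : ℝ, Real.cos (N * t) * g t‖ :=
        (Real.norm_eq_abs _).symm
    _ ≤ ∫ t : ℝ, ‖Real.cos (N * t) * g t‖ :=
        MeasureTheory.norm_integral_le_integral_norm _
    _ = ∫ t : ℝ, |Real.cos (N * t)| * g t := by
        congr 1; funext t
        rw [Real.norm_eq_abs, abs_mul, abs_of_nonneg (hpos t)]
    _ < ∫ t : ℝ, g t := hstrict
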